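/- Let f : ℝ^d → ℝ be C². Suppose x* is a strict saddle point of f (i.e. ∇f(x*) = 0 and ∇²f(x*) has at least one negative eigenvalue), and the positive step sizes α_k converge to 0 with ∑_k α_k = ∞. Let h₁,…,h_d be the eigenvalues of ∇²f(x*) with orthonormal eigenvectors v₁,…,v_d, and set E_cs = span{v_i : h_i ≥ 0}, E_u = span{v_j : h_j < 0}, T_k = I − α_k∇²f(x*). Then there exist K ≥ 0, c > 0 and radius r > 0 such that for all k ≥ K: ‖T_k y‖ ≤ ‖y‖ for y ∈ E_cs, ‖T_k z‖ ≥ (1 + c·α_k)‖z‖ for z ∈ E_u, and Lip((g_k(·+x*) − x* − T_k)|_{B_r(0)}) ≤ c·α_k/20, where g_k(x) = x − α_k∇f(x); moreover setting μ_k = 1 + c·α_k, λ_k = 1, ε_k = c·α_k/5, the series ∑_{k≥K} ε_k/(μ_k − 2ε_k) diverges. -/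

import Mathlib

open Filter Finset Metric RealInnerProductSpace

set_option maxHeartbeats 1000000

/-- Strict saddles are non-uniformly pseudo-hyperbolic unstable fixed points of gradient
descent with vanishing, non-summable step sizes. If `x*` is a strict saddle of the `C²`
function `f`, with orthonormal eigenbasis `v_i` of `∇²f(x*)` and eigenvalues `h_i`, then
with `E_cs = span{v_i : h_i ≥ 0}`, `E_u = span{v_j : h_j < 0}` and
`T_k = I − α_k ∇²f(x*)`, there are `K`, `c > 0`, `r > 0` such that for `k ≥ K`:
`‖T_k y‖ ≤ ‖y‖` on `E_cs`, `‖T_k z‖ ≥ (1 + c α_k)‖z‖` on `E_u`, the shifted map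
`g_k(·+x*) − x* − T_k` is `(c α_k/20)`-Lipschitz on `B_r(0)`, and with `μ_k = 1 + c α_k`,
`λ_k = 1`, `ε_k = c α_k / 5` the series `∑_{k≥K} ε_k/(μ_k − 2ε_k)` diverges. -/
theorem gd_strict_saddle_is_nph {d : ℕ}
    (f : EuclideanSpace ℝ (Fin d) → ℝ) (hf : ContDiff ℝ 2 f)
    (xs : EuclideanSpace ℝ (Fin d)) (hcrit : gradient f xs = 0)
    (h : Fin d → ℝ) (v : Fin d → EuclideanSpace ℝ (Fin d))
    (hON : Orthonormal ℝ v)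
    (heig : ∀ i, fderiv ℝ (gradient f) xs (v i) = h i • v i)
    (hstrict : ∃ i, h i < 0)
    (α : ℕ → ℝ) (hαpos : ∀ k, 0 < α k)
    (hvanish : Tendsto α atTop (nhds 0))
    (hnonsum : ¬ Summable α) :
    ∃ (K : ℕ) (c r : ℝ), 0 < c ∧ 0 < r ∧
      (∀ k ≥ K, ∀ y ∈ Submodule.span ℝ (v '' {i | 0 ≤ h i}),
        ‖y - α k • fderiv ℝ (gradient f) xs y‖ ≤ ‖y‖) ∧
      (∀ k ≥ K, ∀ z ∈ Submodule.span ℝ (v '' {i | h i < 0}),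
        (1 + c * α k) * ‖z‖ ≤ ‖z - α k • fderiv ℝ (gradient f) xs z‖) ∧
      (∀ k ≥ K, ∀ x ∈ ball (0 : EuclideanSpace ℝ (Fin d)) r,
        ∀ x' ∈ ball (0 : EuclideanSpace ℝ (Fin d)) r,
        ‖((((x + xs) - α k • gradient f (x + xs)) - xs)
            - (x - α k • fderiv ℝ (gradient f) xs x))
          - ((((x' + xs) - α k • gradient f (x' + xs)) - xs)
            - (x' - α k • fderiv ℝ (gradient f) xs x'))‖
          ≤ (c * α k / 20) * ‖x - x'‖) ∧
      Tendsto (fun n => ∑ k ∈ range n,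
          (c * α (K + k) / 5) / ((1 + c * α (K + k)) - 2 * (c * α (K + k) / 5)))
        atTop atTop := by
  classical
  obtain ⟨i₀, hi₀⟩ := hstrict
  haveI : Nonempty (Fin d) := ⟨i₀⟩
  set A := fderiv ℝ (gradient f) xs with hAdef
  -- constants
  have hne : (Finset.univ : Finset (Fin d)).Nonempty := ⟨i₀, Finset.mem_univ _⟩
  set Sneg : Finset (Fin d) := Finset.univ.filter (fun j => h j < 0) with hSnegdef
  have hSne : Sneg.Nonempty := ⟨i₀, by simp [hSnegdef, hi₀]⟩
  set c : ℝ := Sneg.inf' hSne (fun j => -h j) with hcdef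
  have hcpos : 0 < c := by
    rw [hcdef, Finset.lt_inf'_iff]
    intro j hj
    simp only [hSnegdef, Finset.mem_filter, Finset.mem_univ, true_and] at hj
    linarith
  have hcle : ∀ j, h j < 0 → c ≤ -h j := fun j hj =>
    Finset.inf'_le _ (by simp [hSnegdef, hj])
  set M : ℝ := Finset.univ.sup' hne (fun i => |h i|) with hMdef
  have hhM : ∀ i, |h i| ≤ M := by
    intro i
    rw [hMdef]
    exact Finset.le_sup' (fun i => |h i|) (Finset.mem_univ i)
  have hcM : c ≤ M := le_trans (hcle i₀ hi₀) (le_trans (neg_le_abs _) (hhM i₀))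
  have hMpos : 0 < M := lt_of_lt_of_le hcpos hcM
  -- choice of K
  obtain ⟨K, hKα⟩ : ∃ K, ∀ k ≥ K, α k ≤ 1 / (1 + M) := by
    obtain ⟨N, hN⟩ := (Metric.tendsto_atTop.mp hvanish) (1 / (1 + M)) (by positivity)
    refine ⟨N, fun k hk => ?_⟩
    have := hN k hk
    rw [Real.dist_eq, sub_zero] at this
    exact le_of_lt (lt_of_le_of_lt (le_abs_self _) this)
  have hcα1 : ∀ k ≥ K, c * α k ≤ 1 := by
    intro k hk
    have h1 : c * α k ≤ M * (1 / (1 + M)) :=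
      mul_le_mul hcM (hKα k hk) (hαpos k).le hMpos.le
    have h2 : M * (1 / (1 + M)) ≤ 1 := by
      rw [mul_one_div, div_le_one (by positivity)]; linarith
    linarith
  -- orthonormal basis
  have hcard : Fintype.card (Fin d) = Module.finrank ℝ (EuclideanSpace ℝ (Fin d)) := by
    simp [finrank_euclideanSpace_fin]
  have hb0 : ⇑(basisOfOrthonormalOfCardEqFinrank hON hcard) = v :=
    coe_basisOfOrthonormalOfCardEqFinrank hON hcard
  set b := (basisOfOrthonormalOfCardEqFinrank hON hcard).toOrthonormalBasis
    (by rw [hb0]; exact hON) with hbdef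
  have hbv : ⇑b = v := by rw [hbdef, Module.Basis.coe_toOrthonormalBasis, hb0]
  have hij : ∀ i j, ⟪v i, v j⟫ = if i = j then (1 : ℝ) else 0 := orthonormal_iff_ite.mp hON
  have hrepr : ∀ (w : EuclideanSpace ℝ (Fin d)) i, b.repr w i = ⟪v i, w⟫ := by
    intro w i; rw [b.repr_apply_apply, hbv]
  have hinnerA : ∀ (y : EuclideanSpace ℝ (Fin d)) (i), ⟪v i, A y⟫ = h i * ⟪v i, y⟫ := by
    intro y i
    conv_lhs => rw [← b.sum_repr y]
    rw [map_sum, inner_sum]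
    have : ∀ j, ⟪v i, A (b.repr y j • b j)⟫ = b.repr y j * (h j * ⟪v i, v j⟫) := by
      intro j
      rw [map_smul, real_inner_smul_right]
      congr 1
      have hbj : b j = v j := by rw [hbv]
      rw [hbj, heig j, real_inner_smul_right]
    rw [Finset.sum_congr rfl fun j _ => this j]
    simp only [hij, mul_ite, mul_one, mul_zero]
    rw [Finset.sum_eq_single i (fun j _ hji => by simp [Ne.symm hji]) (by simp)]
    rw [if_pos rfl, hrepr]
    ring
  have hnorm_sq : ∀ w : EuclideanSpace ℝ (Fin d), ‖w‖ ^ 2 = ∑ i, ⟪v i, w⟫ ^ 2 := by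
    intro w
    have h1 : ‖w‖ = ‖b.repr w‖ := (b.repr.norm_map w).symm
    rw [h1, EuclideanSpace.norm_eq, Real.sq_sqrt (by positivity)]
    exact Finset.sum_congr rfl fun i _ => by rw [hrepr, Real.norm_eq_abs, sq_abs]
  have hTrep : ∀ (a : ℝ) (y : EuclideanSpace ℝ (Fin d)) (i),
      ⟪v i, y - a • A y⟫ = (1 - a * h i) * ⟪v i, y⟫ := by
    intro a y i
    rw [inner_sub_right, real_inner_smul_right, hinnerA]; ring
  have hcoef : ∀ (S : Set (Fin d)) (y : EuclideanSpace ℝ (Fin d)),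
      y ∈ Submodule.span ℝ (v '' S) → ∀ i, i ∉ S → ⟪v i, y⟫ = 0 := by
    intro S y hy i hiS
    have hle : Submodule.span ℝ (v '' S) ≤ LinearMap.ker (innerSL ℝ (v i)).toLinearMap := by
      rw [Submodule.span_le]
      rintro _ ⟨j, hj, rfl⟩
      simp only [SetLike.mem_coe, LinearMap.mem_ker, ContinuousLinearMap.coe_coe, innerSL_apply_apply]
      rw [hij]
      have hij' : i ≠ j := fun e => hiS (e ▸ hj)
      simp [hij']
    exact hle hy
  -- C¹ gradient
  have hgradC1 : ContDiff ℝ 1 (gradient f) := by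
    have h1 : ContDiff ℝ 1 (fderiv ℝ f) := hf.fderiv_right (by norm_num)
    exact (InnerProductSpace.toDual ℝ (EuclideanSpace ℝ (Fin d))).symm.contDiff.comp h1
  have hdiff : Differentiable ℝ (gradient f) := hgradC1.differentiable one_ne_zero
  have hcontF : Continuous (fderiv ℝ (gradient f)) := hgradC1.continuous_fderiv one_ne_zero
  -- radius r
  obtain ⟨r, hrpos, hrball⟩ : ∃ r > 0, ∀ p ∈ ball (0 : EuclideanSpace ℝ (Fin d)) r,
      ‖fderiv ℝ (gradient f) (p + xs) - A‖ ≤ c / 20 := by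
    have hc2 : Continuous fun p : EuclideanSpace ℝ (Fin d) =>
        ‖fderiv ℝ (gradient f) (p + xs) - A‖ :=
      ((hcontF.comp (continuous_id.add continuous_const)).sub continuous_const).norm
    have hU : IsOpen {p : EuclideanSpace ℝ (Fin d) |
        ‖fderiv ℝ (gradient f) (p + xs) - A‖ < c / 20} := isOpen_lt hc2 continuous_const
    have h0 : (0 : EuclideanSpace ℝ (Fin d)) ∈ {p : EuclideanSpace ℝ (Fin d) |
        ‖fderiv ℝ (gradient f) (p + xs) - A‖ < c / 20} := by
      simp only [Set.mem_setOf_eq, zero_add, hAdef, sub_self, norm_zero]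
      positivity
    obtain ⟨r, hr, hball⟩ := Metric.isOpen_iff.mp hU 0 h0
    exact ⟨r, hr, fun p hp => (hball hp).le⟩
  refine ⟨K, c, r, hcpos, hrpos, ?_, ?_, ?_, ?_⟩
  · -- E_cs contraction
    intro k hk y hy
    have hαk := hKα k hk
    have hsq : ‖y - α k • A y‖ ^ 2 ≤ ‖y‖ ^ 2 := by
      rw [hnorm_sq, hnorm_sq]
      refine Finset.sum_le_sum fun i _ => ?_
      rw [hTrep]
      by_cases hhi : 0 ≤ h i
      · have hhiM : h i ≤ M := le_trans (le_abs_self _) (hhM i)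
        have h1 : α k * h i ≤ 1 := by
          have h2 : α k * h i ≤ (1 / (1 + M)) * M :=
            mul_le_mul hαk hhiM hhi (by positivity)
          have h3 : (1 / (1 + M)) * M ≤ 1 := by
            rw [one_div_mul_eq_div, div_le_one (by positivity)]; linarith
          linarith
        have h0 : 0 ≤ α k * h i := mul_nonneg (hαpos k).le hhi
        have hfac : (1 - α k * h i) ^ 2 ≤ 1 := by nlinarith
        rw [mul_pow]
        exact mul_le_of_le_one_left (sq_nonneg _) hfac
      · rw [hcoef _ y hy i (by simpa using hhi)]
        simp
    have := Real.sqrt_le_sqrt hsq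
    rwa [Real.sqrt_sq (norm_nonneg _), Real.sqrt_sq (norm_nonneg _)] at this
  · -- E_u expansion
    intro k hk z hz
    have hca : 0 < 1 + c * α k := by nlinarith [mul_pos hcpos (hαpos k)]
    have hsq : ((1 + c * α k) * ‖z‖) ^ 2 ≤ ‖z - α k • A z‖ ^ 2 := by
      rw [mul_pow, hnorm_sq, hnorm_sq, Finset.mul_sum]
      refine Finset.sum_le_sum fun i _ => ?_
      rw [hTrep, mul_pow]
      by_cases hhi : h i < 0
      · have h1 : 1 + c * α k ≤ 1 - α k * h i := by
          have := hcle i hhi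
          nlinarith [hαpos k]
        have h2 : (1 + c * α k) ^ 2 ≤ (1 - α k * h i) ^ 2 := by nlinarith
        exact mul_le_mul_of_nonneg_right h2 (sq_nonneg _)
      · rw [hcoef _ z hz i (by simpa using hhi)]
        simp
    have := Real.sqrt_le_sqrt hsq
    rwa [Real.sqrt_sq (mul_nonneg hca.le (norm_nonneg _)), Real.sqrt_sq (norm_nonneg _)] at this
  · -- Lipschitz estimate
    intro k hk x hx x' hx'
    set φ : EuclideanSpace ℝ (Fin d) → EuclideanSpace ℝ (Fin d) :=
      fun p => gradient f (p + xs) - A p with hφ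
    have hder : ∀ p ∈ ball (0 : EuclideanSpace ℝ (Fin d)) r,
        HasFDerivWithinAt φ (fderiv ℝ (gradient f) (p + xs) - A)
          (ball (0 : EuclideanSpace ℝ (Fin d)) r) p := by
      intro p hp
      have h1 := ((hdiff (p + xs)).hasFDerivAt).comp p ((hasFDerivAt_id p).add_const xs)
      rw [ContinuousLinearMap.comp_id] at h1
      exact (h1.sub A.hasFDerivAt).hasFDerivWithinAt
    have hlip := (convex_ball (0 : EuclideanSpace ℝ (Fin d)) r).norm_image_sub_le_of_norm_hasFDerivWithin_le
      hder (fun p hp => hrball p hp) hx' hx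
    have hrew : ((((x + xs) - α k • gradient f (x + xs)) - xs) - (x - α k • A x))
          - ((((x' + xs) - α k • gradient f (x' + xs)) - xs) - (x' - α k • A x'))
          = (-(α k)) • (φ x - φ x') := by
      simp only [hφ]
      module
    rw [hrew, norm_smul, norm_neg, Real.norm_eq_abs, abs_of_pos (hαpos k)]
    have hcineq : α k * ‖φ x - φ x'‖ ≤ α k * (c / 20 * ‖x - x'‖) :=
      mul_le_mul_of_nonneg_left hlip (hαpos k).le
    calc α k * ‖φ x - φ x'‖ ≤ α k * (c / 20 * ‖x - x'‖) := hcineq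
      _ = (c * α k / 20) * ‖x - x'‖ := by ring
  · -- divergence
    have hsum : ¬ Summable (fun k => α (K + k)) := by
      have he : (fun k => α (K + k)) = fun k => α (k + K) := by
        funext k; rw [add_comm]
      rw [he, summable_nat_add_iff]
      exact hnonsum
    have h1 : Tendsto (fun n => ∑ k ∈ range n, α (K + k)) atTop atTop :=
      (not_summable_iff_tendsto_nat_atTop_of_nonneg (fun k => (hαpos _).le)).1 hsum
    have h2 : Tendsto (fun n => (c / 10) * ∑ k ∈ range n, α (K + k)) atTop atTop :=
      h1.const_mul_atTop (by positivity)
    refine tendsto_atTop_mono (fun n => ?_) h2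
    rw [Finset.mul_sum]
    refine Finset.sum_le_sum fun k _ => ?_
    have ha := hαpos (K + k)
    have hc1 := hcα1 (K + k) (Nat.le_add_right K k)
    have hd : (0:ℝ) < (1 + c * α (K + k)) - 2 * (c * α (K + k) / 5) := by
      nlinarith [mul_pos hcpos ha]
    rw [le_div_iff₀ hd]
    nlinarith [mul_pos hcpos ha]
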